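/- arXiv:2207.09637 — 3 statements merged into one kernel-verified Lean document; each statement's English description precedes it below -/
import Mathlib

section
/- For all complex numbers z and λ, the double series Σ_{p≥0} Σ_{q≥0} (conj λ)^p λ^q / (p! q!) · J_{p,q}(z) is summable (over ℕ × ℕ) and its sum equals exp(λ · conj z + conj λ · z − 2|λ|²), where J_{p,q}(z) = Σ_{r=0}^{min(p,q)} (−2)^r r! C(p,r) C(q,r) z^{p−r} (conj z)^{q−r}. -/
open scoped ComplexConjugate

/-- The complex Hermite (Hermite–Laguerre–Itô) polynomial
`J_{p,q}(z) = Σ_{r=0}^{min(p,q)} (−2)^r r! C(p,r) C(q,r) z^{p−r} (conj z)^{q−r}`. -/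
noncomputable def complexHermite (p q : ℕ) (z : ℂ) : ℂ :=
  ∑ r ∈ Finset.range (min p q + 1),
    (-2 : ℂ) ^ r * (r.factorial : ℂ) * (p.choose r : ℂ) * (q.choose r : ℂ) *
      z ^ (p - r) * (conj z) ^ (q - r)

private lemma hasSum_exp_div (w : ℂ) :
    HasSum (fun n : ℕ => w ^ n / (n.factorial : ℂ)) (Complex.exp w) := by
  have h := NormedSpace.expSeries_div_summable w
  simpa [Complex.exp_eq_exp_ℂ, NormedSpace.exp_eq_tsum_div] using h.hasSum

private lemma summable_norm_exp_div (w : ℂ) :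
    Summable (fun n : ℕ => ‖w ^ n / (n.factorial : ℂ)‖) := by
  simpa [norm_div, norm_pow] using Real.summable_pow_div_factorial ‖w‖

set_option maxHeartbeats 1600000 in
/-- **Generating function of the complex Hermite polynomials.** -/
theorem hasSum_complexHermite_generating (z lam : ℂ) :
    HasSum
      (fun pq : ℕ × ℕ =>
        (conj lam) ^ pq.1 * lam ^ pq.2 / ((pq.1.factorial : ℂ) * (pq.2.factorial : ℂ)) *
          complexHermite pq.1 pq.2 z)
      (Complex.exp (lam * conj z + conj lam * z - 2 * (‖lam‖ : ℂ) ^ 2)) := by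
  set w1 : ℂ := lam * conj z with hw1
  set w2 : ℂ := conj lam * z with hw2
  set w3 : ℂ := -2 * (lam * conj lam) with hw3
  have hA : ((‖lam‖ : ℝ) : ℂ) ^ 2 = lam * conj lam := by
    rw [← Complex.ofReal_pow, Complex.sq_norm]
    exact (Complex.mul_conj lam).symm
  have hexp : Complex.exp (lam * conj z + conj lam * z - 2 * (‖lam‖ : ℂ) ^ 2)
      = Complex.exp w1 * Complex.exp w2 * Complex.exp w3 := by
    rw [show lam * conj z + conj lam * z - 2 * (‖lam‖ : ℂ) ^ 2 = w1 + w2 + w3 from by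
      rw [hw1, hw2, hw3, hA]; ring]
    rw [Complex.exp_add, Complex.exp_add]
  rw [hexp]
  have h1 := hasSum_exp_div w1
  have h2 := hasSum_exp_div w2
  have h3 := hasSum_exp_div w3
  have Snorm12 : Summable (fun x : ℕ × ℕ =>
      ‖w1 ^ x.1 / (x.1.factorial : ℂ)‖ * ‖w2 ^ x.2 / (x.2.factorial : ℂ)‖) :=
    (summable_norm_exp_div w1).mul_of_nonneg (summable_norm_exp_div w2)
      (fun n => norm_nonneg _) (fun n => norm_nonneg _)
  have S12 : Summable (fun x : ℕ × ℕ =>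
      (w1 ^ x.1 / (x.1.factorial : ℂ)) * (w2 ^ x.2 / (x.2.factorial : ℂ))) := by
    apply Summable.of_norm
    simpa [norm_mul] using Snorm12
  have H12 := h1.mul h2 S12
  have S123 : Summable (fun x : (ℕ × ℕ) × ℕ =>
      ((w1 ^ x.1.1 / (x.1.1.factorial : ℂ)) * (w2 ^ x.1.2 / (x.1.2.factorial : ℂ))) *
        (w3 ^ x.2 / (x.2.factorial : ℂ))) := by
    apply Summable.of_norm
    have := Snorm12.mul_of_nonneg (summable_norm_exp_div w3)
      (fun n => mul_nonneg (norm_nonneg _) (norm_nonneg _)) (fun n => norm_nonneg _)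
    simpa [norm_mul] using this
  have H123 := H12.mul h3 S123
  -- reindex
  set T : (ℕ × ℕ) × ℕ → ℂ := fun x =>
    (conj lam) ^ x.1.1 * lam ^ x.1.2 / ((x.1.1.factorial : ℂ) * (x.1.2.factorial : ℂ)) *
      ((-2 : ℂ) ^ x.2 * (x.2.factorial : ℂ) * (x.1.1.choose x.2 : ℂ) * (x.1.2.choose x.2 : ℂ) *
        z ^ (x.1.1 - x.2) * (conj z) ^ (x.1.2 - x.2)) with hT
  set i : (ℕ × ℕ) × ℕ → (ℕ × ℕ) × ℕ := fun x => ((x.1.2 + x.2, x.1.1 + x.2), x.2) with hi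
  have hinj : Function.Injective i := by
    rintro ⟨⟨a, b⟩, r⟩ ⟨⟨a', b'⟩, r'⟩ h
    simp only [hi, Prod.mk.injEq] at h
    obtain ⟨⟨h1', h2'⟩, h3'⟩ := h
    subst h3'
    simp only [Prod.mk.injEq]
    exact ⟨⟨by omega, by omega⟩, trivial⟩
  have hzero : ∀ x ∉ Set.range i, T x = 0 := by
    rintro ⟨⟨p, q⟩, r⟩ hx
    by_cases hp : r ≤ p
    · by_cases hq : r ≤ q
      · exact absurd ⟨((q - r, p - r), r), by
          simp only [hi, Prod.mk.injEq]
          exact ⟨⟨Nat.sub_add_cancel hp, Nat.sub_add_cancel hq⟩, trivial⟩⟩ hx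
      · simp [hT, Nat.choose_eq_zero_of_lt (lt_of_not_ge hq)]
    · simp [hT, Nat.choose_eq_zero_of_lt (lt_of_not_ge hp)]
  have hcomp : ∀ x, T (i x) = ((w1 ^ x.1.1 / (x.1.1.factorial : ℂ)) *
      (w2 ^ x.1.2 / (x.1.2.factorial : ℂ))) * (w3 ^ x.2 / (x.2.factorial : ℂ)) := by
    rintro ⟨⟨a, b⟩, r⟩
    simp only [hT, hi, Nat.add_sub_cancel]
    rw [Nat.cast_choose ℂ (Nat.le_add_left r b), Nat.cast_choose ℂ (Nat.le_add_left r a),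
      Nat.add_sub_cancel, Nat.add_sub_cancel, hw1, hw2, hw3]
    have fb : ((b + r).factorial : ℂ) ≠ 0 := Nat.cast_ne_zero.mpr (Nat.factorial_ne_zero _)
    have fa : ((a + r).factorial : ℂ) ≠ 0 := Nat.cast_ne_zero.mpr (Nat.factorial_ne_zero _)
    have fr : ((r).factorial : ℂ) ≠ 0 := Nat.cast_ne_zero.mpr (Nat.factorial_ne_zero _)
    have fa' : ((a).factorial : ℂ) ≠ 0 := Nat.cast_ne_zero.mpr (Nat.factorial_ne_zero _)
    have fb' : ((b).factorial : ℂ) ≠ 0 := Nat.cast_ne_zero.mpr (Nat.factorial_ne_zero _)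
    field_simp
    ring
  have HT : HasSum T (Complex.exp w1 * Complex.exp w2 * Complex.exp w3) := by
    rw [← Function.Injective.hasSum_iff hinj hzero]
    have heq : (T ∘ i) = fun x : (ℕ × ℕ) × ℕ =>
        ((w1 ^ x.1.1 / (x.1.1.factorial : ℂ)) * (w2 ^ x.1.2 / (x.1.2.factorial : ℂ))) *
          (w3 ^ x.2 / (x.2.factorial : ℂ)) := funext hcomp
    rw [heq]
    exact H123
  apply HT.prod_fiberwise
  rintro ⟨p, q⟩
  have hvan : ∀ r ∉ Finset.range (min p q + 1), T ((p, q), r) = 0 := by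
    intro r hr
    simp only [Finset.mem_range, not_lt] at hr
    rcases Nat.lt_or_ge p r with h | h
    · simp [hT, Nat.choose_eq_zero_of_lt h]
    · have : q < r := by omega
      simp [hT, Nat.choose_eq_zero_of_lt this]
  have := hasSum_sum_of_ne_finset_zero (L := SummationFilter.unconditional ℕ) hvan
  convert this using 1
  simp only [complexHermite, Finset.mul_sum]
  rfl
end

section
/- For all integers p, q ≥ 0 and all real numbers x, y, writing z = x + i y, one has J_{p,q}(z) = Σ_{j=0}^{p+q} i^{p+q−j} ( Σ_{r+s=j, 0≤r≤p, 0≤s≤q} C(p,r) C(q,s) (−1)^{q−s} ) H_j(x) H_{p+q−j}(y), where H_n is the probabilist's Hermite polynomial (evaluated at the real argument and regarded as a complex number). -/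
open scoped ComplexConjugate

/-- The probabilist's Hermite polynomial `H_n` evaluated at `x : ℝ`. -/
noncomputable def hermiteEval (n : ℕ) (x : ℝ) : ℝ :=
  Polynomial.aeval x (Polynomial.hermite n)

open Polynomial in
lemma derivative_hermite_aux (n : ℕ) :
    derivative (hermite n) = n * hermite (n-1) ∧
      derivative (hermite (n+1)) = (n+1 : ℕ) * hermite n := by
  induction n with
  | zero => simp [hermite_one]
  | succ n ih =>
    refine ⟨ih.2, ?_⟩
    rw [hermite_succ (n+1), derivative_sub, derivative_mul, derivative_X, ih.2,
      derivative_natCast_mul, ih.1, hermite_succ n, ih.1]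
    push_cast
    ring

open Polynomial in
lemma derivative_hermite (n : ℕ) : derivative (hermite n) = n * hermite (n-1) :=
  (derivative_hermite_aux n).1

lemma hermiteEval_succ (n : ℕ) (x : ℝ) :
    hermiteEval (n+1) x = x * hermiteEval n x - n * hermiteEval (n-1) x := by
  simp [hermiteEval, Polynomial.hermite_succ, derivative_hermite]

lemma hermiteEval_zero (x : ℝ) : hermiteEval 0 x = 1 := by
  simp [hermiteEval, Polynomial.hermite_zero]

open Finset

noncomputable def Scoef (p q j : ℕ) : ℂ :=
  ∑ rs ∈ Finset.HasAntidiagonal.antidiagonal j,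
    (p.choose rs.1 : ℂ) * (q.choose rs.2 : ℂ) * (-1 : ℂ) ^ (q - rs.2)

lemma nat_id1 (p r : ℕ) : (r+1) * p.choose (r+1) = p * (p-1).choose r := by
  cases p with
  | zero => simp
  | succ m =>
    simpa [Nat.succ_sub_one, mul_comm] using (Nat.add_one_mul_choose_eq m r).symm

lemma nat_id2 (p r : ℕ) : (p - r) * p.choose r = p * (p-1).choose r := by
  calc (p - r) * p.choose r = p.choose (r+1) * (r+1) := by
        rw [Nat.choose_succ_right_eq, mul_comm]
    _ = p * (p-1).choose r := by rw [mul_comm, nat_id1]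

lemma Scoef_pascal_zero (p q : ℕ) : Scoef (p+1) q 0 = Scoef p q 0 := by
  simp [Scoef]

lemma Scoef_pascal (p q j : ℕ) :
    Scoef (p+1) q (j+1) = Scoef p q (j+1) + Scoef p q j := by
  unfold Scoef
  rw [Finset.Nat.sum_antidiagonal_succ, Finset.Nat.sum_antidiagonal_succ
    (f := fun rs => (p.choose rs.1 : ℂ) * (q.choose rs.2 : ℂ) * (-1 : ℂ) ^ (q - rs.2))]
  simp only [Nat.choose_succ_succ, Nat.cast_add, add_mul, Finset.sum_add_distrib,
    Nat.choose_zero_right]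
  ring

-- second factor sign identity (termwise)
lemma term_id2 (q s : ℕ) :
    ((q - s : ℕ) : ℂ) * (q.choose s : ℂ) * (-1:ℂ)^(q-s)
      = - ((q:ℂ) * ((q-1).choose s : ℂ) * (-1:ℂ)^(q-1-s)) := by
  rcases Nat.lt_or_ge s q with h | h
  · have h1 : q - s = (q - 1 - s) + 1 := by omega
    have h2 : ((q - s : ℕ) : ℂ) * (q.choose s : ℂ) = (q:ℂ) * ((q-1).choose s : ℂ) := by
      exact_mod_cast congrArg (Nat.cast : ℕ → ℂ) (nat_id2 q s)
    rw [show ((q - s : ℕ) : ℂ) * (q.choose s : ℂ) * (-1:ℂ)^(q-s)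
      = (((q - s : ℕ) : ℂ) * (q.choose s : ℂ)) * (-1:ℂ)^(q-s) by ring, h2, h1,
      pow_succ]
    ring
  · rcases Nat.eq_zero_or_pos q with rfl | hq
    · simp
    · have : (q-1).choose s = 0 := Nat.choose_eq_zero_of_lt (by omega)
      have h0 : q - s = 0 := by omega
      simp [this, h0]

lemma term_id (p q r s : ℕ) :
    ((p + q - (r + s) : ℕ):ℂ) * ((p.choose r : ℂ) * (q.choose s : ℂ) * (-1:ℂ)^(q-s))
      = (p:ℂ) * (((p-1).choose r : ℂ) * (q.choose s : ℂ) * (-1:ℂ)^(q-s))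
        - (q:ℂ) * ((p.choose r : ℂ) * (((q-1).choose s : ℂ)) * (-1:ℂ)^(q-1-s)) := by
  rcases Nat.lt_or_ge p r with h | h
  · have h1 : p.choose r = 0 := Nat.choose_eq_zero_of_lt h
    have h2 : (p-1).choose r = 0 := Nat.choose_eq_zero_of_lt (by omega)
    simp [h1, h2]
  · rcases Nat.lt_or_ge q s with h' | h'
    · have h1 : q.choose s = 0 := Nat.choose_eq_zero_of_lt h'
      have h2 : (q-1).choose s = 0 := Nat.choose_eq_zero_of_lt (by omega)
      simp [h1, h2]
    · have hsplit : ((p + q - (r + s) : ℕ):ℂ) = ((p - r : ℕ):ℂ) + ((q - s : ℕ):ℂ) := by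
        rw [← Nat.cast_add]; congr 1; omega
      have hp : ((p - r : ℕ) : ℂ) * (p.choose r : ℂ) = (p:ℂ) * ((p-1).choose r : ℂ) := by
        exact_mod_cast congrArg (Nat.cast : ℕ → ℂ) (nat_id2 p r)
      have hq := term_id2 q s
      calc ((p + q - (r + s) : ℕ):ℂ) * ((p.choose r : ℂ) * (q.choose s : ℂ) * (-1:ℂ)^(q-s))
          = (((p - r : ℕ):ℂ) * (p.choose r : ℂ)) * ((q.choose s : ℂ) * (-1:ℂ)^(q-s))
            + (((q - s : ℕ):ℂ) * (q.choose s : ℂ) * (-1:ℂ)^(q-s)) * (p.choose r : ℂ) := by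
            rw [hsplit]; ring
        _ = _ := by rw [hp, hq]; ring

lemma Scoef_B2 (p q j : ℕ) :
    ((p + q - j : ℕ):ℂ) * Scoef p q j
      = (p:ℂ) * Scoef (p-1) q j - (q:ℂ) * Scoef p (q-1) j := by
  unfold Scoef
  rw [Finset.mul_sum, Finset.mul_sum, Finset.mul_sum, ← Finset.sum_sub_distrib]
  refine Finset.sum_congr rfl fun rs hrs => ?_
  rw [← Finset.HasAntidiagonal.mem_antidiagonal.mp hrs]
  exact term_id p q rs.1 rs.2

lemma Scoef_B1 (p q j : ℕ) :
    ((j:ℂ) + 1) * Scoef p q (j+1)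
      = (p:ℂ) * Scoef (p-1) q j + (q:ℂ) * Scoef p (q-1) j := by
  unfold Scoef
  rw [Finset.mul_sum]
  have step : ∀ rs ∈ Finset.HasAntidiagonal.antidiagonal (j+1),
      ((j:ℂ)+1) * ((p.choose rs.1 : ℂ) * (q.choose rs.2 : ℂ) * (-1:ℂ)^(q-rs.2))
        = (rs.1 : ℂ) * ((p.choose rs.1 : ℂ) * (q.choose rs.2 : ℂ) * (-1:ℂ)^(q-rs.2))
          + (rs.2 : ℂ) * ((p.choose rs.1 : ℂ) * (q.choose rs.2 : ℂ) * (-1:ℂ)^(q-rs.2)) := by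
    intro rs hrs
    have := Finset.HasAntidiagonal.mem_antidiagonal.mp hrs
    have : ((j:ℂ)+1) = (rs.1:ℂ) + (rs.2:ℂ) := by exact_mod_cast congrArg (Nat.cast : ℕ → ℂ) this.symm
    rw [this]; ring
  rw [Finset.sum_congr rfl step, Finset.sum_add_distrib]
  congr 1
  · -- first sum: peel rs.1
    rw [Finset.Nat.sum_antidiagonal_succ]
    simp only [Nat.cast_zero, zero_mul, zero_add]
    rw [Finset.mul_sum]
    refine Finset.sum_congr rfl fun rs _ => ?_
    have h : ((rs.1:ℂ)+1) * (p.choose (rs.1+1) : ℂ) = (p:ℂ) * ((p-1).choose rs.1 : ℂ) := by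
      exact_mod_cast congrArg (Nat.cast : ℕ → ℂ) (nat_id1 p rs.1)
    push_cast
    rw [show ((rs.1:ℂ)+1) * ((p.choose (rs.1+1) : ℂ) * (q.choose rs.2 : ℂ) * (-1:ℂ)^(q-rs.2))
      = (((rs.1:ℂ)+1) * (p.choose (rs.1+1) : ℂ)) * ((q.choose rs.2 : ℂ) * (-1:ℂ)^(q-rs.2)) by ring, h]
    ring
  · -- second sum: peel rs.2
    rw [Finset.Nat.sum_antidiagonal_succ']
    simp only [Nat.cast_zero, zero_mul, zero_add]
    rw [Finset.mul_sum]
    refine Finset.sum_congr rfl fun rs _ => ?_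
    have h : ((rs.2:ℂ)+1) * (q.choose (rs.2+1) : ℂ) = (q:ℂ) * ((q-1).choose rs.2 : ℂ) := by
      exact_mod_cast congrArg (Nat.cast : ℕ → ℂ) (nat_id1 q rs.2)
    have he : q - (rs.2+1) = q - 1 - rs.2 := by omega
    push_cast
    rw [he, show ((rs.2:ℂ)+1) * ((p.choose rs.1 : ℂ) * (q.choose (rs.2+1) : ℂ) * (-1:ℂ)^(q-1-rs.2))
      = (((rs.2:ℂ)+1) * (q.choose (rs.2+1) : ℂ)) * ((p.choose rs.1 : ℂ) * (-1:ℂ)^(q-1-rs.2)) by ring, h]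
    ring

lemma Scoef_vanish (p q j : ℕ) (h : p + q < j) : Scoef p q j = 0 := by
  unfold Scoef
  refine Finset.sum_eq_zero fun rs hrs => ?_
  have := Finset.HasAntidiagonal.mem_antidiagonal.mp hrs
  have : p < rs.1 ∨ q < rs.2 := by omega
  rcases this with h1 | h1
  · simp [Nat.choose_eq_zero_of_lt h1]
  · simp [Nat.choose_eq_zero_of_lt h1]

lemma complexHermite_eq_sum (p q N : ℕ) (h : min p q + 1 ≤ N) (z : ℂ) :
    complexHermite p q z = ∑ r ∈ Finset.range N,
      (-2 : ℂ) ^ r * (r.factorial : ℂ) * (p.choose r : ℂ) * (q.choose r : ℂ) *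
        z ^ (p - r) * (conj z) ^ (q - r) := by
  unfold complexHermite
  refine Finset.sum_subset (Finset.range_subset_range.mpr h) fun r hr hnr => ?_
  have hm : min p q < r := by
    by_contra hc
    exact hnr (Finset.mem_range.mpr (by omega))
  have : p < r ∨ q < r := by omega
  rcases this with h1 | h1
  · have : p.choose r = 0 := Nat.choose_eq_zero_of_lt h1
    simp [this]
  · have : q.choose r = 0 := Nat.choose_eq_zero_of_lt h1
    simp [this]

lemma CH_term (p q' r : ℕ) (z : ℂ) :
    (-2:ℂ)^(r+1) * ((r+1).factorial : ℂ) * (((p+1).choose (r+1)) : ℂ) *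
        (((q'+1).choose (r+1)) : ℂ) * z^(p-r) * (conj z)^(q'-r)
      = z * ((-2:ℂ)^(r+1) * ((r+1).factorial : ℂ) * ((p.choose (r+1)) : ℂ) *
          (((q'+1).choose (r+1)) : ℂ) * z^(p-(r+1)) * (conj z)^(q'-r))
        - 2*((q':ℂ)+1) * ((-2:ℂ)^r * (r.factorial : ℂ) * ((p.choose r) : ℂ) *
          ((q'.choose r) : ℂ) * z^(p-r) * (conj z)^(q'-r)) := by
  have hfact : ((r+1).factorial : ℂ) = ((r:ℂ)+1) * (r.factorial : ℂ) := by
    push_cast [Nat.factorial_succ]; ring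
  have hch : ((r:ℂ)+1) * (((q'+1).choose (r+1)) : ℂ) = ((q':ℂ)+1) * ((q'.choose r) : ℂ) := by
    have := nat_id1 (q'+1) r
    simp only [Nat.add_sub_cancel] at this
    exact_mod_cast congrArg (Nat.cast : ℕ → ℂ) this
  have hsplit : (((p+1).choose (r+1)) : ℂ) = ((p.choose r) : ℂ) + ((p.choose (r+1)) : ℂ) := by
    exact_mod_cast congrArg (Nat.cast : ℕ → ℂ) (Nat.choose_succ_succ p r)
  rcases le_or_gt (r+1) p with hle | hlt
  · have hz : z^(p-r) = z * z^(p-(r+1)) := by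
      rw [show p - r = (p-(r+1))+1 by omega, pow_succ]; ring
    rw [hsplit, hz, hfact]
    linear_combination (-2) * (-2:ℂ)^r * (r.factorial:ℂ) * ((p.choose r):ℂ) * z *
      z^(p-(r+1)) * (conj z)^(q'-r) * hch
  · have hc2 : ((p.choose (r+1)) : ℂ) = 0 := by
      exact_mod_cast congrArg (Nat.cast : ℕ → ℂ) (Nat.choose_eq_zero_of_lt hlt)
    rw [hsplit, hc2, hfact]
    linear_combination (-2) * (-2:ℂ)^r * (r.factorial:ℂ) * ((p.choose r):ℂ) *
      z^(p-r) * (conj z)^(q'-r) * hch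

lemma complexHermite_succ_left (p q : ℕ) (z : ℂ) :
    complexHermite (p+1) q z
      = z * complexHermite p q z - 2*(q:ℂ)*complexHermite p (q-1) z := by
  cases q with
  | zero =>
    simp only [complexHermite, Nat.min_zero, zero_add, Finset.range_one, Finset.sum_singleton,
      Nat.cast_zero]
    simp [pow_succ]
    ring
  | succ q' =>
    rw [complexHermite_eq_sum (p+1) (q'+1) (q'+2) (by omega) z,
      complexHermite_eq_sum p (q'+1) (q'+2) (by omega) z,
      complexHermite_eq_sum p (q'+1-1) (q'+1) (by simp) z]
    rw [Finset.sum_range_succ', Finset.sum_range_succ'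
      (fun r => (-2:ℂ)^r * (r.factorial : ℂ) * ((p.choose r) : ℂ) * (((q'+1).choose r) : ℂ) *
        z^(p-r) * (conj z)^(q'+1-r))]
    simp only [Nat.succ_sub_succ, Nat.add_sub_cancel, Nat.sub_zero, pow_zero,
      Nat.factorial_zero, Nat.choose_zero_right, Nat.cast_one, one_mul, mul_one]
    have hterm : ∀ r ∈ Finset.range (q'+1),
        (-2:ℂ)^(r+1) * ((r+1).factorial : ℂ) * (((p+1).choose (r+1)) : ℂ) *
            (((q'+1).choose (r+1)) : ℂ) * z^(p-r) * (conj z)^(q'-r)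
          = z * ((-2:ℂ)^(r+1) * ((r+1).factorial : ℂ) * ((p.choose (r+1)) : ℂ) *
              (((q'+1).choose (r+1)) : ℂ) * z^(p-(r+1)) * (conj z)^(q'-r))
            - 2*((q':ℂ)+1) * ((-2:ℂ)^r * (r.factorial : ℂ) * ((p.choose r) : ℂ) *
              ((q'.choose r) : ℂ) * z^(p-r) * (conj z)^(q'-r)) :=
      fun r _ => CH_term p q' r z
    rw [Finset.sum_congr rfl hterm, Finset.sum_sub_distrib, ← Finset.mul_sum, ← Finset.mul_sum,
      pow_succ]
    push_cast
    ring
lemma Scoef_key (p q j : ℕ) :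
    ((j:ℂ)+1) * Scoef p q (j+1) - ((p+q-j : ℕ):ℂ) * Scoef p q j
      = 2*(q:ℂ)*Scoef p (q-1) j := by
  rw [Scoef_B1, Scoef_B2]; ring

noncomputable def RHSsum (p q : ℕ) (x y : ℝ) : ℂ :=
  ∑ j ∈ Finset.range (p + q + 1),
    Complex.I ^ (p + q - j) * Scoef p q j *
      (hermiteEval j x : ℂ) * (hermiteEval (p + q - j) y : ℂ)

lemma hermiteEval_succ_c (n : ℕ) (x : ℝ) :
    (hermiteEval (n+1) x : ℂ)
      = (x:ℂ) * (hermiteEval n x : ℂ) - (n:ℂ) * (hermiteEval (n-1) x : ℂ) := by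
  exact_mod_cast congrArg (Complex.ofReal) (hermiteEval_succ n x)

lemma RHS_rec (p q : ℕ) (x y : ℝ) :
    RHSsum (p+1) q x y
      = ((x:ℂ) + (y:ℂ) * Complex.I) * RHSsum p q x y - 2*(q:ℂ)*RHSsum p (q-1) x y := by
  -- abbreviations
  have hz : ((x:ℂ) + (y:ℂ) * Complex.I) * RHSsum p q x y
      = (∑ j ∈ Finset.range (p+q+1), Complex.I ^ (p+q-j) * Scoef p q j *
          (hermiteEval (j+1) x : ℂ) * (hermiteEval (p+q-j) y : ℂ))
        + (∑ j ∈ Finset.range (p+q+1), Complex.I ^ (p+q-j) * Scoef p q j * (j:ℂ) *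
          (hermiteEval (j-1) x : ℂ) * (hermiteEval (p+q-j) y : ℂ))
        + (∑ j ∈ Finset.range (p+q+1), Complex.I ^ (p+q-j) * Complex.I * Scoef p q j *
          (hermiteEval j x : ℂ) * (hermiteEval ((p+q-j)+1) y : ℂ))
        + (∑ j ∈ Finset.range (p+q+1), Complex.I ^ (p+q-j) * Complex.I * Scoef p q j *
          ((p+q-j : ℕ):ℂ) * (hermiteEval j x : ℂ) * (hermiteEval ((p+q-j)-1) y : ℂ)) := by
    unfold RHSsum
    rw [Finset.mul_sum, ← Finset.sum_add_distrib, ← Finset.sum_add_distrib,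
      ← Finset.sum_add_distrib]
    refine Finset.sum_congr rfl fun j hj => ?_
    rw [hermiteEval_succ_c j x, hermiteEval_succ_c (p+q-j) y]
    ring
  have hAC : RHSsum (p+1) q x y
      = (∑ j ∈ Finset.range (p+q+1), Complex.I ^ (p+q-j) * Scoef p q j *
          (hermiteEval (j+1) x : ℂ) * (hermiteEval (p+q-j) y : ℂ))
        + (∑ j ∈ Finset.range (p+q+1), Complex.I ^ (p+q-j) * Complex.I * Scoef p q j *
          (hermiteEval j x : ℂ) * (hermiteEval ((p+q-j)+1) y : ℂ)) := by
    have hC : (∑ j ∈ Finset.range (p+q+1), Complex.I ^ (p+q-j) * Complex.I * Scoef p q j *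
          (hermiteEval j x : ℂ) * (hermiteEval ((p+q-j)+1) y : ℂ))
        = (∑ j ∈ Finset.range (p+q+1), Complex.I ^ (p+q-j) * Scoef p q (j+1) *
            (hermiteEval (j+1) x : ℂ) * (hermiteEval (p+q-j) y : ℂ))
          + Complex.I ^ (p+q+1) * Scoef p q 0 *
            (hermiteEval 0 x : ℂ) * (hermiteEval (p+q+1) y : ℂ) := by
      have e1 : (∑ j ∈ Finset.range (p+q+1), Complex.I ^ (p+q-j) * Complex.I * Scoef p q j *
            (hermiteEval j x : ℂ) * (hermiteEval ((p+q-j)+1) y : ℂ))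
          = ∑ j ∈ Finset.range (p+q+2), Complex.I ^ (p+q+1-j) * Scoef p q j *
            (hermiteEval j x : ℂ) * (hermiteEval (p+q+1-j) y : ℂ) := by
        rw [Finset.sum_range_succ (f := fun j => Complex.I ^ (p+q+1-j) * Scoef p q j *
          (hermiteEval j x : ℂ) * (hermiteEval (p+q+1-j) y : ℂ)) (n := p+q+1)]
        rw [Scoef_vanish p q (p+q+1) (by omega)]
        simp only [mul_zero, zero_mul, add_zero]
        refine Finset.sum_congr rfl fun j hj => ?_
        have hjle : j ≤ p + q := by
          have := Finset.mem_range.mp hj; omega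
        rw [show p+q+1-j = (p+q-j)+1 by omega, pow_succ]
      rw [e1, Finset.sum_range_succ']
      simp only [Nat.succ_sub_succ, Nat.sub_zero]
    rw [hC]
    unfold RHSsum
    simp only [show p+1+q = p+q+1 by omega]
    rw [Finset.sum_range_succ']
    simp only [Nat.succ_sub_succ, Nat.sub_zero, Scoef_pascal, Scoef_pascal_zero]
    simp only [mul_add, add_mul]
    rw [Finset.sum_add_distrib]
    ring
  have hBD : (∑ j ∈ Finset.range (p+q+1), Complex.I ^ (p+q-j) * Scoef p q j * (j:ℂ) *
          (hermiteEval (j-1) x : ℂ) * (hermiteEval (p+q-j) y : ℂ))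
        + (∑ j ∈ Finset.range (p+q+1), Complex.I ^ (p+q-j) * Complex.I * Scoef p q j *
          ((p+q-j : ℕ):ℂ) * (hermiteEval j x : ℂ) * (hermiteEval ((p+q-j)-1) y : ℂ))
      = 2*(q:ℂ)*RHSsum p (q-1) x y := by
    have eB : (∑ j ∈ Finset.range (p+q+1), Complex.I ^ (p+q-j) * Scoef p q j * (j:ℂ) *
          (hermiteEval (j-1) x : ℂ) * (hermiteEval (p+q-j) y : ℂ))
        = ∑ j ∈ Finset.range (p+q), Complex.I ^ (p+q-(j+1)) * Scoef p q (j+1) * ((j+1 : ℕ):ℂ) *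
          (hermiteEval j x : ℂ) * (hermiteEval (p+q-(j+1)) y : ℂ) := by
      rw [Finset.sum_range_succ']
      simp only [Nat.cast_zero, mul_zero, zero_mul, add_zero, Nat.add_sub_cancel]
    have eD : (∑ j ∈ Finset.range (p+q+1), Complex.I ^ (p+q-j) * Complex.I * Scoef p q j *
          ((p+q-j : ℕ):ℂ) * (hermiteEval j x : ℂ) * (hermiteEval ((p+q-j)-1) y : ℂ))
        = ∑ j ∈ Finset.range (p+q), Complex.I ^ (p+q-j) * Complex.I * Scoef p q j *
          ((p+q-j : ℕ):ℂ) * (hermiteEval j x : ℂ) * (hermiteEval ((p+q-j)-1) y : ℂ) := by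
      rw [Finset.sum_range_succ]
      simp [Nat.sub_self]
    rw [eB, eD, ← Finset.sum_add_distrib]
    have hterm : ∀ j ∈ Finset.range (p+q),
        Complex.I ^ (p+q-(j+1)) * Scoef p q (j+1) * ((j+1 : ℕ):ℂ) *
            (hermiteEval j x : ℂ) * (hermiteEval (p+q-(j+1)) y : ℂ)
          + Complex.I ^ (p+q-j) * Complex.I * Scoef p q j *
            ((p+q-j : ℕ):ℂ) * (hermiteEval j x : ℂ) * (hermiteEval ((p+q-j)-1) y : ℂ)
        = Complex.I ^ (p+q-(j+1)) * (2*(q:ℂ)*Scoef p (q-1) j) *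
            (hermiteEval j x : ℂ) * (hermiteEval (p+q-(j+1)) y : ℂ) := by
      intro j hj
      have hjlt : j < p + q := Finset.mem_range.mp hj
      have hk := Scoef_key p q j
      rw [show p+q-j = (p+q-(j+1))+1 by omega] at hk ⊢
      rw [pow_succ]
      simp only [Nat.add_sub_cancel] at hk ⊢
      push_cast at hk ⊢
      linear_combination (Complex.I ^ (p+q-(j+1)) * (hermiteEval j x : ℂ) *
          (hermiteEval (p+q-(j+1)) y : ℂ)) * hk
        + (Complex.I ^ (p+q-(j+1)) * (((p+q-(j+1) : ℕ):ℂ)+1) * Scoef p q j *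
          (hermiteEval j x : ℂ) * (hermiteEval (p+q-(j+1)) y : ℂ)) * Complex.I_sq
    rw [Finset.sum_congr rfl hterm]
    cases q with
    | zero => simp
    | succ q'' =>
      unfold RHSsum
      simp only [Nat.add_sub_cancel, show p + (q''+1) = (p+q'')+1 by omega,
        Nat.succ_sub_succ, Nat.sub_zero]
      rw [Finset.mul_sum]
      refine Finset.sum_congr rfl fun j hj => ?_
      ring
  linear_combination hAC - hz - hBD

lemma Scoef_right_zero (q j : ℕ) : Scoef q 0 j = (q.choose j : ℂ) := by
  unfold Scoef
  rw [Finset.Nat.sum_antidiagonal_eq_sum_range_succ_mk]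
  rw [Finset.sum_eq_single j]
  · simp
  · intro b hb hbj
    have : 0 < j - b := by
      have := Finset.mem_range.mp hb; omega
    simp [Nat.choose_eq_zero_of_lt this]
  · intro h
    exact absurd (Finset.mem_range.mpr (by omega)) h

lemma Scoef_left_zero (q j : ℕ) : Scoef 0 q j = (q.choose j : ℂ) * (-1:ℂ)^(q-j) := by
  unfold Scoef
  rw [Finset.Nat.sum_antidiagonal_eq_sum_range_succ_mk]
  rw [Finset.sum_eq_single 0]
  · simp
  · intro b hb hbj
    have : 0 < b := by omega
    simp [Nat.choose_eq_zero_of_lt this]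
  · intro h
    exact absurd (Finset.mem_range.mpr (by omega)) h

lemma RHS_conj (q : ℕ) (x y : ℝ) : RHSsum 0 q x y = conj (RHSsum q 0 x y) := by
  unfold RHSsum
  rw [map_sum]
  simp only [Nat.zero_add, Nat.add_zero]
  refine Finset.sum_congr rfl fun j hj => ?_
  rw [Scoef_left_zero, Scoef_right_zero]
  simp only [map_mul, map_pow, Complex.conj_I, Complex.conj_ofReal, map_natCast]
  rw [neg_pow]
  ring

lemma base_right (p : ℕ) (x y : ℝ) :
    complexHermite p 0 ((x:ℂ) + (y:ℂ) * Complex.I) = RHSsum p 0 x y := by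
  induction p with
  | zero =>
    simp [complexHermite, RHSsum, Scoef, hermiteEval_zero]
  | succ n ih =>
    rw [complexHermite_succ_left, RHS_rec, ih]

lemma main_eq (p q : ℕ) (x y : ℝ) :
    complexHermite p q ((x:ℂ) + (y:ℂ) * Complex.I) = RHSsum p q x y := by
  induction p generalizing q with
  | zero =>
    have h1 : complexHermite 0 q ((x:ℂ) + (y:ℂ) * Complex.I)
        = conj (complexHermite q 0 ((x:ℂ) + (y:ℂ) * Complex.I)) := by
      simp [complexHermite, map_pow]
    rw [h1, base_right q x y, ← RHS_conj]
  | succ n ih =>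
    rw [complexHermite_succ_left, RHS_rec, ih q, ih (q-1)]

/-- **Expansion of complex Hermite polynomials in products of real Hermite polynomials.**
For `p, q ≥ 0` and real `x, y`, with `z = x + i y`,
`J_{p,q}(z) = Σ_{j=0}^{p+q} i^{p+q−j}
  (Σ_{r+s=j, 0 ≤ r ≤ p, 0 ≤ s ≤ q} C(p,r) C(q,s) (−1)^{q−s}) H_j(x) H_{p+q−j}(y)`
(the terms with `r > p` or `s > q` vanish since then the binomial coefficients are zero). -/
theorem complexHermite_eq_sum_hermite (p q : ℕ) (x y : ℝ) :
    complexHermite p q ((x : ℂ) + (y : ℂ) * Complex.I) =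
      ∑ j ∈ Finset.range (p + q + 1),
        Complex.I ^ (p + q - j) *
          (∑ rs ∈ Finset.HasAntidiagonal.antidiagonal j,
            (p.choose rs.1 : ℂ) * (q.choose rs.2 : ℂ) * (-1 : ℂ) ^ (q - rs.2)) *
          (hermiteEval j x : ℂ) * (hermiteEval (p + q - j) y : ℂ) := by
  have := main_eq p q x y
  unfold RHSsum Scoef at this
  exact this
end

section
/- For all integers m, n ≥ 0 and all real numbers x, y, writing z = x + i y, one has H_m(x) H_n(y) = (i^n / 2^{m+n}) Σ_{j=0}^{m+n} ( Σ_{r+s=j, 0≤r≤m, 0≤s≤n} C(m,r) C(n,s) (−1)^s ) J_{j, m+n−j}(z), where H_n is the probabilist's Hermite polynomial and both sides are regarded as complex numbers. -/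
open scoped ComplexConjugate

namespace CHAux

open Finset

/-! ### Hermite polynomial recurrence -/

lemma derivHermite : ∀ n : ℕ,
    Polynomial.derivative (Polynomial.hermite n) = n * Polynomial.hermite (n-1)
  | 0 => by simp
  | (n+1) => by
    rw [Polynomial.hermite_succ, Polynomial.derivative_sub, Polynomial.derivative_mul,
      Polynomial.derivative_X, one_mul, derivHermite n]
    cases n with
    | zero => simp
    | succ k =>
      have h : Polynomial.hermite (k+1)
          = Polynomial.X * Polynomial.hermite k
            - Polynomial.derivative (Polynomial.hermite k) := Polynomial.hermite_succ k
      simp only [Nat.add_sub_cancel]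
      rw [Polynomial.derivative_mul, h]
      push_cast
      simp only [Polynomial.derivative_add, Polynomial.derivative_natCast,
        Polynomial.derivative_one]
      ring

lemma hermiteEval_rec (n : ℕ) (x : ℝ) :
    hermiteEval (n+1) x = x * hermiteEval n x - n * hermiteEval (n-1) x := by
  unfold hermiteEval
  rw [Polynomial.hermite_succ, map_sub, map_mul, derivHermite, map_mul]
  simp

/-! ### binomial helpers -/

lemma hc1 (m r : ℕ) : ((m:ℂ) - r) * (m.choose r) = m * ((m-1).choose r) := by
  rcases le_or_gt r m with h | h
  · rcases Nat.eq_zero_or_pos m with rfl | hm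
    · interval_cases r; simp
    · have h2 := Nat.choose_succ_right_eq m r
      have h3 : (r+1) * (m.choose (r+1)) = m * ((m-1).choose r) := by
        cases m with
        | zero => omega
        | succ k =>
          simp only [Nat.add_sub_cancel]
          simpa [mul_comm] using (Nat.add_one_mul_choose_eq k r).symm
      have h4 : ((m:ℂ) - r) * (m.choose r) = ((r:ℂ)+1) * (m.choose (r+1)) := by
        have := congrArg (Nat.cast : ℕ → ℂ) h2
        push_cast [Nat.cast_sub h] at this
        linear_combination -this
      rw [h4]
      exact_mod_cast congrArg (Nat.cast : ℕ → ℂ) h3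
  · rw [Nat.choose_eq_zero_of_lt h, Nat.choose_eq_zero_of_lt (by omega)]
    simp

lemma hc2 (m r : ℕ) : ((r:ℂ) + 1) * (m.choose (r+1)) = m * ((m-1).choose r) := by
  cases m with
  | zero => simp
  | succ k =>
    have h3 : (r+1) * ((k+1).choose (r+1)) = (k+1) * (k.choose r) := by
      simpa [mul_comm] using (Nat.add_one_mul_choose_eq k r).symm
    have := congrArg (Nat.cast : ℕ → ℂ) h3
    simp only [Nat.add_sub_cancel]
    push_cast at this ⊢
    linear_combination this

/-! ### the coefficients -/

noncomputable def cc (m n j : ℕ) : ℂ :=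
  ∑ r ∈ range (j+1), (m.choose r : ℂ) * (n.choose (j-r) : ℂ) * (-1 : ℂ) ^ (j-r)

lemma cc_antidiag (m n j : ℕ) :
    (∑ rs ∈ Finset.HasAntidiagonal.antidiagonal j,
      (m.choose rs.1 : ℂ) * (n.choose rs.2 : ℂ) * (-1 : ℂ) ^ rs.2) = cc m n j := by
  rw [Finset.Nat.sum_antidiagonal_eq_sum_range_succ_mk]
  rfl

lemma cc_zero (m n : ℕ) : cc m n 0 = 1 := by simp [cc]

lemma cc_vanish (m n j : ℕ) (h : m + n < j) : cc m n j = 0 := by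
  apply Finset.sum_eq_zero
  intro r hr
  rcases le_or_gt r m with h1 | h1
  · rw [Nat.choose_eq_zero_of_lt (by omega : n < j - r)]; ring
  · rw [Nat.choose_eq_zero_of_lt h1]; ring

lemma ccPn (m n j : ℕ) : cc m (n+1) (j+1) = cc m n (j+1) - cc m n j := by
  unfold cc
  rw [sum_range_succ, sum_range_succ
    (fun r => (m.choose r : ℂ) * (n.choose (j+1-r)) * (-1:ℂ)^(j+1-r))]
  have key : ∀ r ∈ range (j+1),
      (m.choose r : ℂ) * ((n+1).choose (j+1-r) : ℂ) * (-1:ℂ)^(j+1-r)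
      = ((m.choose r : ℂ) * (n.choose (j+1-r) : ℂ) * (-1:ℂ)^(j+1-r)
        - (m.choose r : ℂ) * (n.choose (j-r) : ℂ) * (-1:ℂ)^(j-r)) := by
    intro r hr
    simp only [mem_range] at hr
    have h1 : j + 1 - r = (j - r) + 1 := by omega
    rw [h1, Nat.choose_succ_succ', pow_succ]
    push_cast
    ring
  rw [sum_congr rfl key, sum_sub_distrib]
  simp only [Nat.sub_self, Nat.choose_zero_right, pow_zero, Nat.cast_one]
  ring

lemma ccPm (m n j : ℕ) : cc (m+1) n (j+1) = cc m n (j+1) + cc m n j := by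
  unfold cc
  rw [sum_range_succ', sum_range_succ'
    (fun r => (m.choose r : ℂ) * (n.choose (j+1-r)) * (-1:ℂ)^(j+1-r))]
  have key : ∀ r ∈ range (j+1),
      ((m+1).choose (r+1) : ℂ) * (n.choose (j+1-(r+1)) : ℂ) * (-1:ℂ)^(j+1-(r+1))
      = ((m.choose (r+1) : ℂ) * (n.choose (j-r) : ℂ) * (-1:ℂ)^(j-r)
        + (m.choose r : ℂ) * (n.choose (j-r) : ℂ) * (-1:ℂ)^(j-r)) := by
    intro r hr
    have h1 : j + 1 - (r + 1) = j - r := by omega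
    rw [h1, Nat.choose_succ_succ]
    push_cast
    ring
  rw [sum_congr rfl key, sum_add_distrib]
  have h2 : ∀ r ∈ range (j+1),
      (m.choose (r+1) : ℂ) * (n.choose (j-r) : ℂ) * (-1:ℂ)^(j-r)
      = (m.choose (r+1) : ℂ) * (n.choose (j+1-(r+1)) : ℂ) * (-1:ℂ)^(j+1-(r+1)) := by
    intro r hr
    have h1 : j + 1 - (r + 1) = j - r := by omega
    rw [h1]
  rw [sum_congr rfl h2]
  simp only [Nat.choose_zero_right, Nat.cast_one]
  ring

lemma ccA (m n j : ℕ) : ((j:ℂ)+1) * cc m n (j+1)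
    = m * cc (m-1) n j - n * cc m (n-1) j := by
  unfold cc
  rw [mul_sum]
  have split : ∀ i ∈ range (j+1+1),
      ((j:ℂ)+1) * ((m.choose i : ℂ) * (n.choose (j+1-i)) * (-1:ℂ)^(j+1-i))
      = ((i:ℂ) * ((m.choose i : ℂ) * (n.choose (j+1-i)) * (-1:ℂ)^(j+1-i))
        + ((j:ℂ)+1-i) * ((m.choose i : ℂ) * (n.choose (j+1-i)) * (-1:ℂ)^(j+1-i))) := by
    intro i _; ring
  rw [sum_congr rfl split, sum_add_distrib]
  have e1 : ∑ i ∈ range (j+1+1), (i:ℂ) * ((m.choose i : ℂ) * (n.choose (j+1-i)) * (-1:ℂ)^(j+1-i))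
      = (m:ℂ) * ∑ r ∈ range (j+1), ((m-1).choose r : ℂ) * (n.choose (j-r)) * (-1:ℂ)^(j-r) := by
    rw [sum_range_succ']
    have key : ∀ i ∈ range (j+1),
        ((i+1 : ℕ):ℂ) * ((m.choose (i+1) : ℂ) * (n.choose (j+1-(i+1))) * (-1:ℂ)^(j+1-(i+1)))
        = (m:ℂ) * (((m-1).choose i : ℂ) * (n.choose (j-i)) * (-1:ℂ)^(j-i)) := by
      intro i _
      have h1 : j + 1 - (i + 1) = j - i := by omega
      rw [h1]
      have h2 := hc2 m i
      push_cast
      linear_combination (↑(n.choose (j-i)) * (-1:ℂ)^(j-i)) * h2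
    rw [sum_congr rfl key, ← mul_sum]
    push_cast
    ring
  have e2 : ∑ i ∈ range (j+1+1),
        ((j:ℂ)+1-i) * ((m.choose i : ℂ) * (n.choose (j+1-i)) * (-1:ℂ)^(j+1-i))
      = -((n:ℂ) * ∑ r ∈ range (j+1), (m.choose r : ℂ) * ((n-1).choose (j-r)) * (-1:ℂ)^(j-r)) := by
    rw [sum_range_succ]
    have key : ∀ i ∈ range (j+1),
        ((j:ℂ)+1-i) * ((m.choose i : ℂ) * (n.choose (j+1-i)) * (-1:ℂ)^(j+1-i))
        = -((n:ℂ) * ((m.choose i : ℂ) * (((n-1).choose (j-i)) : ℂ) * (-1:ℂ)^(j-i))) := by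
      intro i hi
      simp only [mem_range] at hi
      have h1 : j + 1 - i = (j - i) + 1 := by omega
      have h3 : ((j - i : ℕ) : ℂ) = (j:ℂ) - i := by
        push_cast [Nat.cast_sub (by omega : i ≤ j)]; ring
      have h2 := hc2 n (j-i)
      rw [h1, pow_succ]
      rw [h3] at h2
      linear_combination (-(m.choose i : ℂ) * (-1:ℂ)^(j-i)) * h2
    rw [sum_congr rfl key]
    push_cast
    rw [sum_neg_distrib]
    simp only [Nat.add_sub_cancel_left, Nat.sub_self]
    rw [← mul_sum]
    ring
  rw [e1, e2]
  ring

lemma ccB (m n j : ℕ) : ((m:ℂ) + n - j) * cc m n j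
    = m * cc (m-1) n j + n * cc m (n-1) j := by
  unfold cc
  simp only [mul_sum]
  rw [← sum_add_distrib]
  apply sum_congr rfl
  intro r hr
  simp only [mem_range] at hr
  have h3 : ((j - r : ℕ) : ℂ) = (j:ℂ) - r := by
    push_cast [Nat.cast_sub (by omega : r ≤ j)]; ring
  have h1 := hc1 m r
  have h2 := hc1 n (j-r)
  rw [h3] at h2
  linear_combination ((n.choose (j-r) : ℂ) * (-1:ℂ)^(j-r)) * h1
    + ((m.choose r : ℂ) * (-1:ℂ)^(j-r)) * h2

/-! ### complexHermite lemmas -/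

lemma J_ext (p q K : ℕ) (h : min p q ≤ K) (z : ℂ) :
    complexHermite p q z = ∑ r ∈ range (K+1),
      (-2 : ℂ) ^ r * (r.factorial : ℂ) * (p.choose r : ℂ) * (q.choose r : ℂ) *
        z ^ (p - r) * (conj z) ^ (q - r) := by
  unfold complexHermite
  apply Finset.sum_subset
  · intro x hx; simp only [mem_range] at *; omega
  · intro x hx hx'
    simp only [mem_range] at *
    rcases Nat.lt_or_ge p x with h1 | h1
    · rw [Nat.choose_eq_zero_of_lt h1]; ring
    · rw [Nat.choose_eq_zero_of_lt (by omega : q < x)]; ring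

lemma J_conj_arg (p q : ℕ) (z : ℂ) :
    complexHermite p q (conj z) = complexHermite q p z := by
  unfold complexHermite
  rw [Nat.min_comm q p]
  apply sum_congr rfl
  intro r _
  simp only [Complex.conj_conj]
  ring

lemma J_rec_z (p q : ℕ) (z : ℂ) :
    z * complexHermite p q z
      = complexHermite (p+1) q z + 2*(q:ℂ) * complexHermite p (q-1) z := by
  set K := p + q + 1 with hK
  rw [J_ext p q K (by omega) z, J_ext (p+1) q K (by omega) z, J_ext p (q-1) K (by omega) z,
    mul_sum, mul_sum]
  rw [← sub_eq_iff_eq_add', ← sum_sub_distrib]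
  conv_rhs => rw [sum_range_succ]
  rw [sum_range_succ']
  congr 1
  · apply sum_congr rfl
    intro x hx
    simp only [mem_range] at hx
    have e1 : p + 1 - (x + 1) = p - x := by omega
    have e2 : q - (x + 1) = q - 1 - x := by omega
    rw [e1, e2, Nat.choose_succ_succ p x, Nat.factorial_succ]
    have h2 := hc2 q x
    rcases Nat.lt_or_ge x p with hxp | hxp
    · have e3 : p - x = (p - (x + 1)) + 1 := by omega
      rw [e3, pow_succ]
      push_cast
      linear_combination (2*(-2:ℂ)^x * (x.factorial : ℂ) * (p.choose x : ℂ)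
        * z^(p-(x+1)) * z * (conj z)^(q-1-x)) * h2
    · rw [Nat.choose_eq_zero_of_lt (by omega : p < x + 1)]
      push_cast
      linear_combination (2*(-2:ℂ)^x * (x.factorial : ℂ) * (p.choose x : ℂ)
        * z^(p-x) * (conj z)^(q-1-x)) * h2
  · rw [Nat.choose_eq_zero_of_lt (by omega : q - 1 < K)]
    simp only [Nat.sub_zero, Nat.choose_zero_right, Nat.factorial_zero]
    rw [pow_succ]
    push_cast
    ring

lemma J_rec_conj (p q : ℕ) (z : ℂ) :
    conj z * complexHermite p q z
      = complexHermite p (q+1) z + 2*(p:ℂ) * complexHermite (p-1) q z := by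
  have h := J_rec_z q p (conj z)
  rwa [J_conj_arg, J_conj_arg, J_conj_arg] at h

/-! ### the sum `T` and its recurrences -/

noncomputable def T (m n : ℕ) (z : ℂ) : ℂ :=
  ∑ j ∈ range (m+n+1), cc m n j * complexHermite j (m+n-j) z

lemma T_rec_n (m n : ℕ) (z : ℂ) :
    T m (n+1) z = 4*(n:ℂ) * T m (n-1) z - (z - conj z) * T m n z := by
  have expand : (z - conj z) * T m n z
      = ((∑ j ∈ range (m+n+1), cc m n j * complexHermite (j+1) (m+n-j) z)
        + ∑ j ∈ range (m+n+1),
            2*((m+n-j : ℕ):ℂ) * cc m n j * complexHermite j (m+n-j-1) z)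
        - ((∑ j ∈ range (m+n+1), cc m n j * complexHermite j (m+n-j+1) z)
        + ∑ j ∈ range (m+n+1), 2*(j:ℂ) * cc m n j * complexHermite (j-1) (m+n-j) z) := by
    unfold T
    rw [mul_sum, ← sum_add_distrib, ← sum_add_distrib, ← sum_sub_distrib]
    apply sum_congr rfl
    intro j _
    have hz := J_rec_z j (m+n-j) z
    have hzc := J_rec_conj j (m+n-j) z
    linear_combination (cc m n j) * hz - (cc m n j) * hzc
  have claimA : T m (n+1) z
      = (∑ j ∈ range (m+n+1), cc m n j * complexHermite j (m+n-j+1) z)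
        - ∑ j ∈ range (m+n+1), cc m n j * complexHermite (j+1) (m+n-j) z := by
    have e0 : ∀ j ∈ range (m+n+1),
        cc m n j * complexHermite j (m+n-j+1) z
        = cc m n j * complexHermite j (m+n+1-j) z := by
      intro j hj
      simp only [mem_range] at hj
      rw [show m+n-j+1 = m+n+1-j by omega]
    rw [sum_congr rfl e0]
    have e1 : ∑ j ∈ range (m+n+1), cc m n j * complexHermite j (m+n+1-j) z
        = ∑ j ∈ range (m+n+1+1), cc m n j * complexHermite j (m+n+1-j) z := by
      conv_rhs => rw [sum_range_succ]
      rw [cc_vanish m n (m+n+1) (by omega)]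
      simp
    rw [e1]
    show (∑ j ∈ range (m+n+1+1), cc m (n+1) j * complexHermite j (m+n+1-j) z) = _
    rw [sum_range_succ',
      sum_range_succ' (fun j => cc m n j * complexHermite j (m+n+1-j) z)]
    have key : ∀ j ∈ range (m+n+1),
        cc m (n+1) (j+1) * complexHermite (j+1) (m+n+1-(j+1)) z
        = (cc m n (j+1) * complexHermite (j+1) (m+n+1-(j+1)) z
          - cc m n j * complexHermite (j+1) (m+n-j) z) := by
      intro j _
      rw [ccPn, show m+n+1-(j+1) = m+n-j by omega]
      ring
    rw [sum_congr rfl key, sum_sub_distrib]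
    simp only [cc_zero, Nat.sub_zero]
    ring
  have claimB : (∑ j ∈ range (m+n+1),
        2*((m+n-j : ℕ):ℂ) * cc m n j * complexHermite j (m+n-j-1) z)
        - (∑ j ∈ range (m+n+1), 2*(j:ℂ) * cc m n j * complexHermite (j-1) (m+n-j) z)
      = 4*(n:ℂ) * T m (n-1) z := by
    rw [sum_range_succ,
      sum_range_succ' (fun j => 2*(j:ℂ) * cc m n j * complexHermite (j-1) (m+n-j) z)]
    have key : ∀ j ∈ range (m+n),
        2*((m+n-j : ℕ):ℂ) * cc m n j * complexHermite j (m+n-j-1) z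
        - 2*((j+1:ℕ):ℂ) * cc m n (j+1) * complexHermite (j+1-1) (m+n-(j+1)) z
        = 4*(n:ℂ) * cc m (n-1) j * complexHermite j (m+n-1-j) z := by
      intro j hj
      simp only [mem_range] at hj
      have e1 : m+n-j-1 = m+n-1-j := by omega
      have e2 : m+n-(j+1) = m+n-1-j := by omega
      have e3 : ((m+n-j : ℕ):ℂ) = (m:ℂ) + n - j := by
        push_cast [Nat.cast_sub (by omega : j ≤ m+n)]; ring
      rw [e1, e2, e3, Nat.add_sub_cancel]
      have hB := ccB m n j
      have hA := ccA m n j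
      push_cast
      linear_combination (2 * complexHermite j (m+n-1-j) z) * hB
        - (2 * complexHermite j (m+n-1-j) z) * hA
    rw [add_sub_add_comm, ← sum_sub_distrib, sum_congr rfl key]
    have hab : 2*((m+n-(m+n) : ℕ):ℂ) * cc m n (m+n) * complexHermite (m+n) (m+n-(m+n)-1) z
        - 2*((0:ℕ):ℂ) * cc m n 0 * complexHermite (0-1) (m+n-0) z = 0 := by
      simp [Nat.sub_self]
    rw [hab, add_zero]
    cases n with
    | zero => simp
    | succ k =>
      unfold T
      rw [mul_sum]
      apply sum_congr rfl
      intro j hj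
      rw [show m+(k+1)-1-j = m+k-j by omega, Nat.add_sub_cancel]
      ring
  linear_combination claimA + expand + claimB

lemma T_rec_m (m n : ℕ) (z : ℂ) :
    T (m+1) n z = (z + conj z) * T m n z - 4*(m:ℂ) * T (m-1) n z := by
  have expand : (z + conj z) * T m n z
      = ((∑ j ∈ range (m+n+1), cc m n j * complexHermite (j+1) (m+n-j) z)
        + ∑ j ∈ range (m+n+1),
            2*((m+n-j : ℕ):ℂ) * cc m n j * complexHermite j (m+n-j-1) z)
        + ((∑ j ∈ range (m+n+1), cc m n j * complexHermite j (m+n-j+1) z)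
        + ∑ j ∈ range (m+n+1), 2*(j:ℂ) * cc m n j * complexHermite (j-1) (m+n-j) z) := by
    unfold T
    rw [mul_sum, ← sum_add_distrib, ← sum_add_distrib, ← sum_add_distrib]
    apply sum_congr rfl
    intro j _
    have hz := J_rec_z j (m+n-j) z
    have hzc := J_rec_conj j (m+n-j) z
    linear_combination (cc m n j) * hz + (cc m n j) * hzc
  have claimA : T (m+1) n z
      = (∑ j ∈ range (m+n+1), cc m n j * complexHermite j (m+n-j+1) z)
        + ∑ j ∈ range (m+n+1), cc m n j * complexHermite (j+1) (m+n-j) z := by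
    have e0 : ∀ j ∈ range (m+n+1),
        cc m n j * complexHermite j (m+n-j+1) z
        = cc m n j * complexHermite j (m+n+1-j) z := by
      intro j hj
      simp only [mem_range] at hj
      rw [show m+n-j+1 = m+n+1-j by omega]
    rw [sum_congr rfl e0]
    have e1 : ∑ j ∈ range (m+n+1), cc m n j * complexHermite j (m+n+1-j) z
        = ∑ j ∈ range (m+n+1+1), cc m n j * complexHermite j (m+n+1-j) z := by
      conv_rhs => rw [sum_range_succ]
      rw [cc_vanish m n (m+n+1) (by omega)]
      simp
    rw [e1]
    have e2 : T (m+1) n z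
        = ∑ j ∈ range (m+n+1+1), cc (m+1) n j * complexHermite j (m+n+1-j) z := by
      unfold T
      apply sum_congr (by rw [show m+1+n = m+n+1 by omega])
      intro j hj
      rw [show m+1+n = m+n+1 by omega]
    rw [e2, sum_range_succ',
      sum_range_succ' (fun j => cc m n j * complexHermite j (m+n+1-j) z)]
    have key : ∀ j ∈ range (m+n+1),
        cc (m+1) n (j+1) * complexHermite (j+1) (m+n+1-(j+1)) z
        = (cc m n (j+1) * complexHermite (j+1) (m+n+1-(j+1)) z
          + cc m n j * complexHermite (j+1) (m+n-j) z) := by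
      intro j _
      rw [ccPm, show m+n+1-(j+1) = m+n-j by omega]
      ring
    rw [sum_congr rfl key, sum_add_distrib]
    simp only [cc_zero, Nat.sub_zero]
    ring
  have claimB : (∑ j ∈ range (m+n+1),
        2*((m+n-j : ℕ):ℂ) * cc m n j * complexHermite j (m+n-j-1) z)
        + (∑ j ∈ range (m+n+1), 2*(j:ℂ) * cc m n j * complexHermite (j-1) (m+n-j) z)
      = 4*(m:ℂ) * T (m-1) n z := by
    rw [sum_range_succ,
      sum_range_succ' (fun j => 2*(j:ℂ) * cc m n j * complexHermite (j-1) (m+n-j) z)]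
    have key : ∀ j ∈ range (m+n),
        2*((m+n-j : ℕ):ℂ) * cc m n j * complexHermite j (m+n-j-1) z
        + 2*((j+1:ℕ):ℂ) * cc m n (j+1) * complexHermite (j+1-1) (m+n-(j+1)) z
        = 4*(m:ℂ) * cc (m-1) n j * complexHermite j (m+n-1-j) z := by
      intro j hj
      simp only [mem_range] at hj
      have e1 : m+n-j-1 = m+n-1-j := by omega
      have e2 : m+n-(j+1) = m+n-1-j := by omega
      have e3 : ((m+n-j : ℕ):ℂ) = (m:ℂ) + n - j := by
        push_cast [Nat.cast_sub (by omega : j ≤ m+n)]; ring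
      rw [e1, e2, e3, Nat.add_sub_cancel]
      have hB := ccB m n j
      have hA := ccA m n j
      push_cast
      linear_combination (2 * complexHermite j (m+n-1-j) z) * hB
        + (2 * complexHermite j (m+n-1-j) z) * hA
    rw [add_add_add_comm, ← sum_add_distrib, sum_congr rfl key]
    have hab : 2*((m+n-(m+n) : ℕ):ℂ) * cc m n (m+n) * complexHermite (m+n) (m+n-(m+n)-1) z
        + 2*((0:ℕ):ℂ) * cc m n 0 * complexHermite (0-1) (m+n-0) z = 0 := by
      simp [Nat.sub_self]
    rw [hab, add_zero]
    cases m with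
    | zero => simp
    | succ k =>
      unfold T
      rw [mul_sum]
      apply sum_congr (by rw [show k+1+n = (k+1-1)+n+1 by omega])
      intro j hj
      rw [show k+1+n-1-j = k+1-1+n-j by omega]
      ring
  linear_combination claimA - expand - claimB

/-! ### main induction -/

def P' (m n : ℕ) (x y : ℝ) : Prop :=
  (2:ℂ)^(m+n) * (hermiteEval m x : ℂ) * (hermiteEval n y : ℂ)
    = Complex.I ^ n * T m n ((x:ℂ) + (y:ℂ) * Complex.I)

lemma key0 (x y : ℝ) : ∀ m, P' m 0 x y := by
  intro m
  induction m using Nat.strong_induction_on with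
  | _ m ih =>
    match m with
    | 0 =>
      unfold P'
      simp [hermiteEval, T, cc, complexHermite]
    | (k+1) =>
      have IH1 := ih k (by omega)
      have IH2 := ih (k-1) (by omega)
      unfold P' at IH1 IH2 ⊢
      have hcast : ((hermiteEval (k+1) x : ℝ):ℂ)
          = (x:ℂ) * (hermiteEval k x : ℂ) - (k:ℂ) * (hermiteEval (k-1) x : ℂ) := by
        have := hermiteEval_rec k x
        push_cast [this]
        ring
      have hT := T_rec_m k 0 ((x:ℂ) + (y:ℂ)*Complex.I)
      have hzz : ((x:ℂ)+(y:ℂ)*Complex.I) + conj ((x:ℂ)+(y:ℂ)*Complex.I) = 2*(x:ℂ) := by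
        rw [map_add, map_mul, Complex.conj_ofReal, Complex.conj_ofReal, Complex.conj_I]
        ring
      rw [hcast, hT, hzz]
      simp only [pow_zero, one_mul, add_zero] at IH1 IH2 ⊢
      cases k with
      | zero =>
        simp only [Nat.zero_sub, Nat.cast_zero] at IH2 ⊢
        linear_combination 2*(x:ℂ)*IH1
      | succ l =>
        simp only [Nat.add_sub_cancel] at IH2 ⊢
        push_cast
        linear_combination 2*(x:ℂ)*IH1 - (4*((l:ℂ)+1))*IH2

lemma keyAll (x y : ℝ) : ∀ n m, P' m n x y := by
  intro n
  induction n using Nat.strong_induction_on with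
  | _ n ih =>
    match n with
    | 0 => exact fun m => key0 x y m
    | (k+1) =>
      intro m
      have IH1 := ih k (by omega) m
      have IH2 := ih (k-1) (by omega) m
      unfold P' at IH1 IH2 ⊢
      have hcast : ((hermiteEval (k+1) y : ℝ):ℂ)
          = (y:ℂ) * (hermiteEval k y : ℂ) - (k:ℂ) * (hermiteEval (k-1) y : ℂ) := by
        have := hermiteEval_rec k y
        push_cast [this]
        ring
      have hT := T_rec_n m k ((x:ℂ) + (y:ℂ)*Complex.I)
      have hzz : ((x:ℂ)+(y:ℂ)*Complex.I) - conj ((x:ℂ)+(y:ℂ)*Complex.I)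
          = 2*(y:ℂ)*Complex.I := by
        rw [map_add, map_mul, Complex.conj_ofReal, Complex.conj_ofReal, Complex.conj_I]
        ring
      rw [hcast, hT, hzz]
      cases k with
      | zero =>
        simp only [Nat.zero_sub, Nat.cast_zero, pow_zero, one_mul, zero_mul, mul_zero,
          sub_zero, zero_sub, add_zero, pow_one] at IH1 IH2 ⊢
        linear_combination 2*(y:ℂ)*IH1
          + (2*(y:ℂ)*T m 0 ((x:ℂ)+(y:ℂ)*Complex.I))*Complex.I_sq
      | succ l =>
        simp only [Nat.add_sub_cancel] at IH2 ⊢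
        push_cast
        linear_combination 2*(y:ℂ)*IH1 - (4*((l:ℂ)+1))*IH2
          + (2*(y:ℂ)*Complex.I^(l+1)*T m (l+1) ((x:ℂ)+(y:ℂ)*Complex.I)
            - 4*((l:ℂ)+1)*Complex.I^l*T m l ((x:ℂ)+(y:ℂ)*Complex.I))*Complex.I_sq

end CHAux

/-- **Expansion of products of real Hermite polynomials in complex Hermite polynomials.**
For `m, n ≥ 0` and real `x, y`, with `z = x + i y`,
`H_m(x) H_n(y) = (i^n / 2^{m+n}) Σ_{j=0}^{m+n}
  (Σ_{r+s=j, 0 ≤ r ≤ m, 0 ≤ s ≤ n} C(m,r) C(n,s) (−1)^s) J_{j, m+n−j}(z)`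
(the terms with `r > m` or `s > n` vanish since then the binomial coefficients are zero). -/
theorem hermite_mul_hermite_eq_sum_complexHermite (m n : ℕ) (x y : ℝ) :
    (hermiteEval m x : ℂ) * (hermiteEval n y : ℂ) =
      Complex.I ^ n / 2 ^ (m + n) *
        ∑ j ∈ Finset.range (m + n + 1),
          (∑ rs ∈ Finset.HasAntidiagonal.antidiagonal j,
            (m.choose rs.1 : ℂ) * (n.choose rs.2 : ℂ) * (-1 : ℂ) ^ rs.2) *
          complexHermite j (m + n - j) ((x : ℂ) + (y : ℂ) * Complex.I) := by
  have h := CHAux.keyAll x y n m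
  unfold CHAux.P' at h
  have hsum : (∑ j ∈ Finset.range (m + n + 1),
      (∑ rs ∈ Finset.HasAntidiagonal.antidiagonal j,
        (m.choose rs.1 : ℂ) * (n.choose rs.2 : ℂ) * (-1 : ℂ) ^ rs.2) *
      complexHermite j (m + n - j) ((x : ℂ) + (y : ℂ) * Complex.I))
      = CHAux.T m n ((x:ℂ) + (y:ℂ) * Complex.I) := by
    unfold CHAux.T
    apply Finset.sum_congr rfl
    intro j _
    rw [CHAux.cc_antidiag]
  rw [hsum]
  have h2 : (2:ℂ)^(m+n) ≠ 0 := pow_ne_zero _ two_ne_zero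
  field_simp
  linear_combination h
end
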